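/- Let n ≥ 2 and let 0 < M < 1. Then there exists α > 1 such that the function u(t) = t - t^α satisfies the strict differential inequality -u''(t)(1 - t²) + n t u'(t) > n u(t) for all t ∈ (0, M], and moreover u(0) = 0 and u(t) > 0 for t ∈ (0, M]. -/

import Mathlib

open Real Set

/-- For n ≥ 2 and 0 < M < 1 there is α > 1 such that u(t) = t - t^α satisfies
    -u''(t)(1-t²) + n t u'(t) > n u(t) on (0,M], u(0) = 0, and u > 0 on (0,M]. -/
theorem stmt_0 (n : ℝ) (hn : 2 ≤ n) (M : ℝ) (hM0 : 0 < M) (hM1 : M < 1) :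
    ∃ α : ℝ, 1 < α ∧
      (∀ t ∈ Ioc (0:ℝ) M,
        -(deriv (deriv (fun t : ℝ => t - t ^ α)) t) * (1 - t ^ (2:ℕ))
            + n * t * deriv (fun t : ℝ => t - t ^ α) t
          > n * (t - t ^ α)) ∧
      ((0:ℝ) - (0:ℝ) ^ α = 0) ∧
      (∀ t ∈ Ioc (0:ℝ) M, 0 < t - t ^ α) := by
  have hM2 : (0:ℝ) < 1 - M ^ 2 := by nlinarith
  set α : ℝ := 2 + n * M ^ 2 / (1 - M ^ 2) with hα
  have hα1 : 1 < α := by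
    have : 0 ≤ n * M ^ 2 / (1 - M ^ 2) := by positivity
    simp only [hα]; linarith
  have hd1 : ∀ x : ℝ, x ≠ 0 →
      HasDerivAt (fun t : ℝ => t - t ^ α) (1 - α * x ^ (α - 1)) x := by
    intro x hx
    exact (hasDerivAt_id x).sub (Real.hasDerivAt_rpow_const (Or.inl hx))
  have hderiv1 : ∀ x : ℝ, x ≠ 0 →
      deriv (fun t : ℝ => t - t ^ α) x = 1 - α * x ^ (α - 1) :=
    fun x hx => (hd1 x hx).deriv
  have hderiv2 : ∀ x : ℝ, 0 < x →
      deriv (deriv (fun t : ℝ => t - t ^ α)) x = -(α * ((α - 1) * x ^ (α - 2))) := by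
    intro x hx
    have hev : deriv (fun t : ℝ => t - t ^ α) =ᶠ[nhds x]
        fun y => 1 - α * y ^ (α - 1) := by
      filter_upwards [eventually_ne_nhds hx.ne'] with y hy using hderiv1 y hy
    rw [hev.deriv_eq]
    have h := (((Real.hasDerivAt_rpow_const (p := α - 1)
      (Or.inl hx.ne')).const_mul α).const_sub 1)
    have h2 : α - 1 - 1 = α - 2 := by ring
    rw [h2] at h
    exact h.deriv
  refine ⟨α, hα1, ?_, ?_, ?_⟩
  · rintro t ⟨ht0, htM⟩
    rw [hderiv1 t ht0.ne', hderiv2 t ht0]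
    have hP : (0:ℝ) < t ^ (α - 2) := Real.rpow_pos_of_pos ht0 _
    have e1 : t ^ (α - 1) = t ^ (α - 2) * t := by
      rw [show α - 1 = (α - 2) + 1 by ring, Real.rpow_add ht0, Real.rpow_one]
    have e2 : t ^ α = t ^ (α - 2) * t ^ (2:ℕ) := by
      rw [show α = (α - 2) + 2 by ring, Real.rpow_add ht0]
      norm_num [Real.rpow_natCast]
    have ht2 : t ^ (2:ℕ) = t * t := sq t
    -- key positivity: α (1 - t²) - n t² > 0
    have hkey : 0 < α * (1 - t ^ 2) - n * t ^ 2 := by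
      have ht2M : t ^ 2 ≤ M ^ 2 := by nlinarith
      have h1 : α * (1 - M ^ 2) = 2 * (1 - M ^ 2) + n * M ^ 2 := by
        rw [hα, add_mul, div_mul_cancel₀ _ hM2.ne']
      have h2 : α * (1 - t ^ 2) ≥ α * (1 - M ^ 2) := by
        apply mul_le_mul_of_nonneg_left (by linarith) (by linarith)
      nlinarith
    rw [e1, e2]
    nlinarith [mul_pos hP hkey, mul_pos (mul_pos hP hkey) (sub_pos.mpr hα1)]
  · rw [Real.zero_rpow (by positivity)]; ring
  · rintro t ⟨ht0, htM⟩
    have : t ^ α < t ^ (1:ℝ) :=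
      Real.rpow_lt_rpow_of_exponent_gt ht0 (by linarith) hα1
    rw [Real.rpow_one] at this
    linarith
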